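/- For the Frank–Wolfe iterates x(t_0), x(t_1), …, x(t_T) (with x(t_0) = 0 and the prescribed time steps t_j), every coordinate i ∈ {1,…,n} and every j ∈ {0,1,…,T} satisfy 1 − x_i(t_j) ≥ e^{−t_j/(1+t_j)}. -/

import Mathlib

/-- The harmonic number `H j = ∑_{k=1}^j 1/k` (with `H 0 = 0`). -/
noncomputable def harmonicNum (j : ℕ) : ℝ := ∑ k ∈ Finset.range j, (1 : ℝ) / (k + 1)

/-- `H_{2,j} = ∑_{k=1}^j 1/k²`. -/
noncomputable def harmonicNum2 (j : ℕ) : ℝ := ∑ k ∈ Finset.range j, (1 : ℝ) / ((k : ℝ) + 1) ^ 2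

/-- The time values `t_j = 1/(1 - ln(1 + H_j/H_T)) - 1` of the Frank–Wolfe algorithm. -/
noncomputable def fwTime (T j : ℕ) : ℝ :=
  1 / (1 - Real.log (1 + harmonicNum j / harmonicNum T)) - 1

/-- The Frank–Wolfe step ratio `e^{-1/(1+t_j) + 1/(1+t_{j+1})}`. -/
noncomputable def fwRatio (T j : ℕ) : ℝ :=
  Real.exp (-(1 / (1 + fwTime T j)) + 1 / (1 + fwTime T (j + 1)))

/-- `√a_{t_j} = e^{t_j/(1+t_j)}`. -/
noncomputable def fwSqa (T j : ℕ) : ℝ := Real.exp (fwTime T j / (1 + fwTime T j))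

/-- `F : [0,1]^n → ℝ` is DR-submodular: for all `x ≤ y` in `[0,1]^n`, coordinates `i` and
`a > 0` with `x + a·e_i, y + a·e_i ∈ [0,1]^n`, one has
`F(x + a·e_i) - F(x) ≥ F(y + a·e_i) - F(y)`. -/
def DRSubmodular {n : ℕ} (F : (Fin n → ℝ) → ℝ) : Prop :=
  ∀ x y : Fin n → ℝ, x ∈ Set.Icc (0 : Fin n → ℝ) 1 → y ∈ Set.Icc (0 : Fin n → ℝ) 1 →
    x ≤ y → ∀ i : Fin n, ∀ a : ℝ, 0 < a →
      x + a • (Pi.single i 1 : Fin n → ℝ) ∈ Set.Icc (0 : Fin n → ℝ) 1 →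
      y + a • (Pi.single i 1 : Fin n → ℝ) ∈ Set.Icc (0 : Fin n → ℝ) 1 →
      F (y + a • (Pi.single i 1 : Fin n → ℝ)) - F y ≤
        F (x + a • (Pi.single i 1 : Fin n → ℝ)) - F x

/-- The continuous linear map `y ↦ ⟨g, y⟩ = ∑ i, g i * y i` on `ℝⁿ`. -/
noncomputable def gradCLM {n : ℕ} (g : Fin n → ℝ) : (Fin n → ℝ) →L[ℝ] ℝ :=
  ∑ i, g i • (ContinuousLinearMap.proj i : (Fin n → ℝ) →L[ℝ] ℝ)

/-- `gradF` is the gradient of `F` on the box `[0,1]^n`: at each point of the box, `F` is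
differentiable within the box with derivative `y ↦ ⟨gradF z, y⟩`. -/
def HasGradientOnBox {n : ℕ} (F : (Fin n → ℝ) → ℝ) (gradF : (Fin n → ℝ) → Fin n → ℝ) : Prop :=
  ∀ z ∈ Set.Icc (0 : Fin n → ℝ) 1, HasFDerivWithinAt F (gradCLM (gradF z)) (Set.Icc 0 1) z


lemma harmonicNum_nonneg (j : ℕ) : 0 ≤ harmonicNum j := by
  unfold harmonicNum; positivity

lemma harmonicNum_mono : Monotone harmonicNum := by
  intro a b hab
  unfold harmonicNum
  apply Finset.sum_le_sum_of_subset_of_nonneg (Finset.range_subset_range.2 hab)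
  intros; positivity

lemma harmonicNum_pos {T : ℕ} (hT : 1 ≤ T) : 0 < harmonicNum T := by
  have h1 : (0:ℝ) < harmonicNum 1 := by norm_num [harmonicNum]
  exact lt_of_lt_of_le h1 (harmonicNum_mono hT)

lemma fw_c_pos {T j : ℕ} (hT : 1 ≤ T) (hj : j ≤ T) :
    0 < 1 - Real.log (1 + harmonicNum j / harmonicNum T) := by
  have hHT := harmonicNum_pos hT
  have h1 : harmonicNum j / harmonicNum T ≤ 1 := by
    rw [div_le_one hHT]; exact harmonicNum_mono hj
  have hnn : 0 ≤ harmonicNum j / harmonicNum T := div_nonneg (harmonicNum_nonneg j) hHT.le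
  have h2 : Real.log (1 + harmonicNum j / harmonicNum T) ≤ Real.log 2 := by
    apply Real.log_le_log (by linarith)
    linarith
  have h3 := Real.log_two_lt_d9
  linarith

lemma fw_exponent {T j : ℕ} (hT : 1 ≤ T) (hj : j ≤ T) :
    -(fwTime T j) / (1 + fwTime T j) =
      (1 - Real.log (1 + harmonicNum j / harmonicNum T)) - 1 := by
  have hc := fw_c_pos hT hj
  set c := 1 - Real.log (1 + harmonicNum j / harmonicNum T) with hcdef
  have ht : fwTime T j = 1 / c - 1 := rfl
  rw [ht]
  field_simp
  ring

lemma fw_inv_one_add {T j : ℕ} (hT : 1 ≤ T) (hj : j ≤ T) :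
    1 / (1 + fwTime T j) = 1 - Real.log (1 + harmonicNum j / harmonicNum T) := by
  have hc := fw_c_pos hT hj
  set c := 1 - Real.log (1 + harmonicNum j / harmonicNum T) with hcdef
  have ht : fwTime T j = 1 / c - 1 := rfl
  rw [ht]
  field_simp
  ring

/-- Lemma 1 of the paper. For the Frank–Wolfe iterates with `x(t_0) = 0`,
every coordinate `i` and every `j ∈ {0,…,T}` satisfy `1 - x_i(t_j) ≥ e^{-t_j/(1+t_j)}`. -/
theorem fw_coordinate_upper_bound
    (n : ℕ) (hn : 1 ≤ n)
    (P : Set (Fin n → ℝ)) (hPsub : P ⊆ Set.Icc 0 1) (hPconv : Convex ℝ P)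
    (h0P : (0 : Fin n → ℝ) ∈ P)
    (T : ℕ) (hT : 1 ≤ T)
    (x v : ℕ → Fin n → ℝ)
    (hx0 : x 0 = 0)
    (hvP : ∀ j < T, v j ∈ P)
    (hstep : ∀ j < T, x (j + 1) = fwRatio T j • x j + (1 - fwRatio T j) • v j) :
    ∀ j ≤ T, ∀ i : Fin n,
      1 - x j i ≥ Real.exp (-(fwTime T j) / (1 + fwTime T j)) := by
  intro j
  induction j with
  | zero =>
    intro _ i
    have h0 : fwTime T 0 = 0 := by simp [fwTime, harmonicNum]
    simp [hx0, h0]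
  | succ j ih =>
    intro hjT i
    have hjlt : j < T := hjT
    have hjT' : j ≤ T := Nat.le_of_succ_le hjT
    have ihj := ih hjT' i
    set cj := 1 - Real.log (1 + harmonicNum j / harmonicNum T) with hcj
    set cj1 := 1 - Real.log (1 + harmonicNum (j+1) / harmonicNum T) with hcj1
    have hcjpos := fw_c_pos hT hjT'
    have hcj1pos := fw_c_pos hT hjT
    have hle : cj1 ≤ cj := by
      have hHT := harmonicNum_pos hT
      have hdiv : harmonicNum j / harmonicNum T ≤ harmonicNum (j+1) / harmonicNum T := by
        gcongr
        exact harmonicNum_mono (Nat.le_succ j)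
      have hlog : Real.log (1 + harmonicNum j / harmonicNum T)
          ≤ Real.log (1 + harmonicNum (j+1) / harmonicNum T) := by
        apply Real.log_le_log
        · have := harmonicNum_nonneg j
          positivity
        · linarith
      rw [hcj, hcj1]; linarith
    have hr : fwRatio T j = Real.exp (cj1 - cj) := by
      unfold fwRatio
      rw [fw_inv_one_add hT hjT', fw_inv_one_add hT hjT, ← hcj, ← hcj1]
      ring_nf
    have hrle1 : fwRatio T j ≤ 1 := by
      rw [hr]
      calc Real.exp (cj1 - cj) ≤ Real.exp 0 := Real.exp_le_exp.2 (by linarith)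
        _ = 1 := Real.exp_zero
    have hrpos : 0 < fwRatio T j := Real.exp_pos _
    have hv := hPsub (hvP j hjlt)
    have hv1 : v j i ≤ 1 := hv.2 i
    have hx1 : x (j+1) i = fwRatio T j * x j i + (1 - fwRatio T j) * v j i := by
      rw [hstep j hjlt]; simp
    have key : 1 - x (j+1) i
        = fwRatio T j * (1 - x j i) + (1 - fwRatio T j) * (1 - v j i) := by
      rw [hx1]; ring
    rw [ge_iff_le, fw_exponent hT hjT, ← hcj1, key]
    rw [fw_exponent hT hjT', ← hcj] at ihj
    have h1 : fwRatio T j * Real.exp (cj - 1) ≤ fwRatio T j * (1 - x j i) :=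
      mul_le_mul_of_nonneg_left ihj hrpos.le
    have h2 : 0 ≤ (1 - fwRatio T j) * (1 - v j i) :=
      mul_nonneg (by linarith) (by linarith)
    have h3 : fwRatio T j * Real.exp (cj - 1) = Real.exp (cj1 - 1) := by
      rw [hr, ← Real.exp_add]; ring_nf
    linarith
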